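/- Let w be the Buchstab function: w(u) = 1/u for 1 ≤ u ≤ 2, and (u·w(u))' = w(u−1) for u > 2. Then w(u) ≤ 1 for all u ≥ 1. -/

import Mathlib

/-- The Buchstab function `w` (continuous on `[1,∞)`, `w(u) = 1/u` on `[1,2]`,
`(u·w(u))' = w(u-1)` for `u > 2`) satisfies `w(u) ≤ 1` for all `u ≥ 1`. -/
theorem buchstab_function_le_one (w : ℝ → ℝ) (hcont : ContinuousOn w (Set.Ici 1))
    (h12 : ∀ u : ℝ, 1 ≤ u → u ≤ 2 → w u = 1 / u)
    (hode : ∀ u : ℝ, 2 < u → HasDerivAt (fun v => v * w v) (w (u - 1)) u) :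
    ∀ u : ℝ, 1 ≤ u → w u ≤ 1 := by
  have base : ∀ u : ℝ, 1 ≤ u → u ≤ 2 → w u ≤ 1 := by
    intro u h1 h2
    rw [h12 u h1 h2, div_le_one (by linarith)]
    linarith
  have key : ∀ n : ℕ, ∀ u : ℝ, 1 ≤ u → u ≤ 2 + n → w u ≤ 1 := by
    intro n
    induction n with
    | zero => intro u h1 h2; exact base u h1 (by simpa using h2)
    | succ n ih =>
      intro u h1 h2
      rcases le_or_gt u 2 with h | h
      · exact base u h1 h
      set g : ℝ → ℝ := fun v => v - v * w v with hg
      have hmono : MonotoneOn g (Set.Icc 2 u) := by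
        apply monotoneOn_of_deriv_nonneg (convex_Icc 2 u)
        · apply ContinuousOn.sub continuousOn_id
          exact continuousOn_id.mul (hcont.mono (by
            intro x hx
            simp only [Set.mem_Icc, Set.mem_Ici] at hx ⊢
            linarith [hx.1]))
        · intro x hx
          rw [interior_Icc] at hx
          exact ((hasDerivAt_id x).sub (hode x hx.1)).differentiableAt.differentiableWithinAt
        · intro x hx
          rw [interior_Icc] at hx
          have hd : HasDerivAt g (1 - w (x - 1)) x := by
            exact (hasDerivAt_id' x).sub (hode x hx.1)
          rw [hd.deriv]
          have hx2 : w (x - 1) ≤ 1 := by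
            apply ih (x - 1) (by linarith [hx.1])
            push_cast at h2 ⊢
            linarith [hx.2]
          linarith
      have h2mem : (2:ℝ) ∈ Set.Icc 2 u := ⟨le_refl 2, h.le⟩
      have humem : u ∈ Set.Icc 2 u := ⟨h.le, le_refl u⟩
      have hle := hmono h2mem humem h.le
      have hw2 : w 2 = 1 / 2 := h12 2 (by norm_num) (by norm_num)
      have hg2 : g 2 = 1 := by simp [hg, hw2]; norm_num
      have huw : u * w u ≤ u - 1 := by
        simp only [hg] at hle hg2
        linarith
      have hu0 : (0:ℝ) < u := by linarith
      have : u * w u ≤ u * 1 := by linarith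
      exact le_of_mul_le_mul_left this hu0
  intro u h1
  refine key ⌈u⌉₊ u h1 ?_
  have := Nat.le_ceil u
  push_cast at this ⊢
  linarith
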